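/- The composite finite-powerset functor P∘P is not zippable: there exist sets A and B such that the map ⟨PP(A + !), PP(! + B)⟩ : PP(A+B) → PP(A+1) × PP(1+B) is not injective. Concretely, for A with distinct elements a₁, a₂ and B with distinct elements b₁, b₂, the sets {{a₁,b₁},{a₂,b₂}} and {{a₁,b₂},{a₂,b₁}} (with suitable injections into A+B) have the same image under this map. -/

import Mathlib

/-- The powerset functor on maps: direct image. -/
def Pmap {X Y : Type*} (f : X → Y) : Set X → Set Y := Set.image f

theorem stmt4 (A B : Type*) (a₁ a₂ : A) (b₁ b₂ : B) (ha : a₁ ≠ a₂) (hb : b₁ ≠ b₂) :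
    (({{Sum.inl a₁, Sum.inr b₁}, {Sum.inl a₂, Sum.inr b₂}} : Set (Set (A ⊕ B))) ≠
      {{Sum.inl a₁, Sum.inr b₂}, {Sum.inl a₂, Sum.inr b₁}}) ∧
    (Pmap (Pmap (Sum.map id fun _ => PUnit.unit))
        ({{Sum.inl a₁, Sum.inr b₁}, {Sum.inl a₂, Sum.inr b₂}} : Set (Set (A ⊕ B))) =
      Pmap (Pmap (Sum.map id fun _ => PUnit.unit))
        {{Sum.inl a₁, Sum.inr b₂}, {Sum.inl a₂, Sum.inr b₁}}) ∧
    (Pmap (Pmap (Sum.map (fun _ => PUnit.unit) id))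
        ({{Sum.inl a₁, Sum.inr b₁}, {Sum.inl a₂, Sum.inr b₂}} : Set (Set (A ⊕ B))) =
      Pmap (Pmap (Sum.map (fun _ => PUnit.unit) id))
        {{Sum.inl a₁, Sum.inr b₂}, {Sum.inl a₂, Sum.inr b₁}}) ∧
    ¬ Function.Injective (fun S : Set (Set (A ⊕ B)) =>
        (Pmap (Pmap (Sum.map id fun _ => PUnit.unit)) S,
         Pmap (Pmap (Sum.map (fun _ => PUnit.unit) id)) S)) := by
  have hne : (({{Sum.inl a₁, Sum.inr b₁}, {Sum.inl a₂, Sum.inr b₂}} : Set (Set (A ⊕ B))) ≠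
      {{Sum.inl a₁, Sum.inr b₂}, {Sum.inl a₂, Sum.inr b₁}}) := by
    intro h
    have hmem : ({Sum.inl a₁, Sum.inr b₁} : Set (A ⊕ B)) ∈
        ({{Sum.inl a₁, Sum.inr b₂}, {Sum.inl a₂, Sum.inr b₁}} : Set (Set (A ⊕ B))) := by
      rw [← h]; left; rfl
    rcases hmem with h' | h'
    · have h'' : (Sum.inr b₁ : A ⊕ B) ∈ ({Sum.inl a₁, Sum.inr b₂} : Set (A ⊕ B)) := by
        rw [← h']; right; rfl
      rcases h'' with h'' | h''
      · exact Sum.inr_ne_inl h''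
      · exact hb (Sum.inr.inj h'')
    · have h'' : (Sum.inl a₁ : A ⊕ B) ∈ ({Sum.inl a₂, Sum.inr b₁} : Set (A ⊕ B)) := by
        rw [← h']; left; rfl
      rcases h'' with h'' | h''
      · exact ha (Sum.inl.inj h'')
      · exact Sum.inl_ne_inr h''
  refine ⟨hne, ?_, ?_, fun hinj => hne (hinj ?_)⟩
  · simp only [Pmap, Set.image_insert_eq, Set.image_singleton, Sum.map_inl, Sum.map_inr, id]
  · simp only [Pmap, Set.image_insert_eq, Set.image_singleton, Sum.map_inl, Sum.map_inr, id]
    rw [Set.pair_comm]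
  · simp only [Pmap, Set.image_insert_eq, Set.image_singleton, Sum.map_inl, Sum.map_inr, id,
      Prod.mk.injEq]
    exact ⟨trivial, Set.pair_comm _ _⟩
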